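/- arXiv:1811.02040 — 2 statements merged into one kernel-verified Lean document; each statement's English description precedes it below -/
import Mathlib

section
/- Let N be a finite free module of rank 4 over a commutative ring, N* its dual, and consider the map from ⋀^2 N to Hom(N*, N) sending a∧b to the map f ↦ f(a)b - f(b)a. If A ⊆ N' is a lattice (finite free W'-submodule of full rank) in a 4-dimensional vector space N' over the fraction field of a DVR W', then an element x ∈ ⋀^2 N' satisfies x(A*) ⊆ A if and only if x ∈ ⋀^2 A, where A* ⊆ N'* is the dual lattice of functionals integrally valued on A. -/
/-!
STATEMENT 6: Let `W'` be a DVR with fraction field `K = W'_ℚ`, let `N'` be a 4-dimensional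
`K`-vector space, and consider the map `⋀² N' → Hom(N'^*, N')` sending `a∧b` to
`f ↦ f(a)•b - f(b)•a`.  If `A ⊆ N'` is a full `W'`-lattice, then `x ∈ ⋀² N'` satisfies
`x(A^*) ⊆ A` if and only if `x ∈ ⋀² A`, where `A^* = {f | f(A) ⊆ W'}` is the dual lattice.
-/

/-- The wedge `a ∧ b` as an element of the second exterior power. -/
noncomputable def wedge2 (K : Type*) [Field K] (N : Type*) [AddCommGroup N] [Module K N]
    (a b : N) : ⋀[K]^2 N :=
  ⟨ExteriorAlgebra.ιMulti K 2 ![a, b], ExteriorAlgebra.ιMulti_range K 2 ⟨![a, b], rfl⟩⟩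

/-- `⋀² A`: the `W'`-submodule of `⋀² N` spanned by wedges of elements of a `W'`-submodule
`A ⊆ N`. -/
noncomputable def lambda2 (W' K : Type*) [CommRing W'] [Field K] [Algebra W' K]
    (N : Type*) [AddCommGroup N] [Module K N] [Module W' N] [IsScalarTower W' K N]
    (A : Submodule W' N) : Submodule W' (⋀[K]^2 N) :=
  Submodule.span W' {w : ⋀[K]^2 N | ∃ a ∈ A, ∃ b ∈ A, w = wedge2 K N a b}

lemma wedge2_coe (K : Type*) [Field K] (N : Type*) [AddCommGroup N] [Module K N] (a b : N) :
    ((wedge2 K N a b : ⋀[K]^2 N) : ExteriorAlgebra K N) =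
      ExteriorAlgebra.ι K a * ExteriorAlgebra.ι K b := by
  simp [wedge2, ExteriorAlgebra.ιMulti_apply, List.ofFn_succ]

lemma wedge2_swap (K : Type*) [Field K] (N : Type*) [AddCommGroup N] [Module K N] (a b : N) :
    wedge2 K N b a = - wedge2 K N a b := by
  apply Subtype.ext
  push_cast [wedge2_coe]
  exact eq_neg_of_add_eq_zero_left (ExteriorAlgebra.ι_add_mul_swap b a)

lemma wedge2_same (K : Type*) [Field K] (N : Type*) [AddCommGroup N] [Module K N] (a : N) :
    wedge2 K N a a = 0 := by
  apply Subtype.ext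
  push_cast [wedge2_coe]
  exact ExteriorAlgebra.ι_sq_zero a

theorem stmt_6 (W' : Type*) [CommRing W'] [IsDomain W'] [IsDiscreteValuationRing W']
    (K : Type*) [Field K] [Algebra W' K] [IsFractionRing W' K]
    (N' : Type*) [AddCommGroup N'] [Module K N'] [Module W' N'] [IsScalarTower W' K N']
    (hdim : Module.finrank K N' = 4)
    -- the action of `⋀² N'` on the dual space: `(a∧b)(f) = f(a)•b - f(b)•a`
    (T : ⋀[K]^2 N' →ₗ[K] Module.Dual K N' →ₗ[K] N')
    (hT : ∀ (a b : N') (f : Module.Dual K N'),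
      T (wedge2 K N' a b) f = f a • b - f b • a)
    -- `A` is a full `W'`-lattice in `N'`
    (A : Submodule W' N') (hAfg : A.FG) (hAfull : Submodule.span K (A : Set N') = ⊤)
    (x : ⋀[K]^2 N') :
    (∀ f : Module.Dual K N',
        (∀ a ∈ A, f a ∈ Set.range (algebraMap W' K)) → T x f ∈ A)
      ↔ x ∈ lambda2 W' K N' A := by
  classical
  have hinj : Function.Injective (algebraMap W' K) := IsFractionRing.injective W' K
  constructor
  · -- hard direction
    intro hx
    haveI : Module.Finite W' A := Module.Finite.iff_fg.mpr hAfg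
    haveI : NoZeroSMulDivisors W' A := by
      constructor
      intro w a h
      by_cases hw : w = 0
      · exact Or.inl hw
      · refine Or.inr (Subtype.ext ?_)
        have h2 : (algebraMap W' K w) • (a : N') = 0 := by
          rw [algebraMap_smul]
          exact congrArg Subtype.val h
        rcases smul_eq_zero.mp h2 with h3 | h3
        · exact absurd (hinj (by rw [h3, map_zero])) hw
        · exact h3
    haveI : Module.Free W' A := Module.free_of_finite_type_torsion_free'
    set ι := Module.Free.ChooseBasisIndex W' A with hι
    let b : Module.Basis ι W' A := Module.Free.chooseBasis W' A
    letI : LinearOrder ι := LinearOrder.lift' (Fintype.equivFin ι) (Equiv.injective _)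
    let v : ι → N' := fun i => (b i : N')
    have hvA : ∀ i, v i ∈ A := fun i => (b i).2
    have hli : LinearIndependent K v := by
      have h0 : LinearIndependent W' v :=
        b.linearIndependent.map' A.subtype (Submodule.ker_subtype A)
      exact h0.localization K (nonZeroDivisors W')
    -- every element of A is a W'-combination of the v i
    have hrepA : ∀ a (ha : a ∈ A), a = ∑ i, (b.repr ⟨a, ha⟩ i) • v i := by
      intro a ha
      conv_lhs => rw [show a = ((⟨a, ha⟩ : A) : N') from rfl, ← b.sum_repr ⟨a, ha⟩]
      push_cast
      rfl
    have hsp : ⊤ ≤ Submodule.span K (Set.range v) := by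
      rw [← hAfull]
      refine Submodule.span_le.mpr fun a ha => ?_
      rw [hrepA a ha]
      exact Submodule.sum_mem _ fun i _ => Submodule.smul_of_tower_mem _ _
        (Submodule.subset_span ⟨i, rfl⟩)
    let B : Module.Basis ι K N' := Module.Basis.mk hli hsp
    have hB : ∀ i, B i = v i := fun i => Module.Basis.mk_apply hli hsp i
    -- coordinates of elements of A are integral
    have hcoord : ∀ a ∈ A, ∀ k, B.repr a k ∈ Set.range (algebraMap W' K) := by
      intro a ha k
      refine ⟨b.repr ⟨a, ha⟩ k, ?_⟩
      have h1 : a = ∑ i, algebraMap W' K (b.repr ⟨a, ha⟩ i) • B i := by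
        conv_lhs => rw [hrepA a ha]
        refine Finset.sum_congr rfl fun i _ => ?_
        rw [hB, algebraMap_smul]
      have h2 := congrArg (fun y => B.repr y k) h1
      rw [h2, B.repr_sum_self]
    have hdual : ∀ k, ∀ a ∈ A, (B.coord k) a ∈ Set.range (algebraMap W' K) :=
      fun k a ha => hcoord a ha k
    -- x as a K-combination of basis wedges
    have hx1 : (x : ExteriorAlgebra K N') ∈ Submodule.span K
        (Set.range fun p : ι × ι =>
          ((wedge2 K N' (v p.1) (v p.2) : ⋀[K]^2 N') : ExteriorAlgebra K N')) := by
      have hx0 : (x : ExteriorAlgebra K N') ∈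
          Submodule.span K (Set.range (ExteriorAlgebra.ιMulti K 2 (M := N'))) := by
        rw [ExteriorAlgebra.ιMulti_span_fixedDegree]
        exact x.2
      refine Submodule.span_le.mpr ?_ hx0
      rintro _ ⟨u, rfl⟩
      have hu : ExteriorAlgebra.ιMulti K 2 u =
          ExteriorAlgebra.ι K (u 0) * ExteriorAlgebra.ι K (u 1) := by
        have := wedge2_coe K N' (u 0) (u 1)
        rw [← this]
        congr 1
        ext i
        fin_cases i <;> rfl
      have hιa : ∀ a : N', ExteriorAlgebra.ι K a = ∑ i, B.repr a i • ExteriorAlgebra.ι K (v i) := by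
        intro a
        conv_lhs => rw [← B.sum_repr a]
        rw [map_sum]
        exact Finset.sum_congr rfl fun i _ => by rw [map_smul, hB]
      rw [hu, hιa (u 0), hιa (u 1), Finset.sum_mul_sum]
      refine Submodule.sum_mem _ fun i _ => Submodule.sum_mem _ fun j _ => ?_
      rw [smul_mul_smul_comm]
      exact Submodule.smul_mem _ _ (Submodule.subset_span ⟨(i, j), wedge2_coe K N' (v i) (v j)⟩)
    rw [Submodule.mem_span_range_iff_exists_fun] at hx1
    obtain ⟨c, hc⟩ := hx1
    have hxsub : x = ∑ p : ι × ι, c p • wedge2 K N' (v p.1) (v p.2) := by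
      apply Subtype.ext
      push_cast
      exact hc.symm
    -- compute T x (B.coord k)
    have hδ : ∀ (k i : ι), (B.coord k) (v i) = if i = k then 1 else 0 := by
      intro k i
      rw [← hB, Module.Basis.coord_apply, B.repr_self, Finsupp.single_apply]
    have hreprv : ∀ (j l : ι), B.repr (v j) l = if j = l then 1 else 0 := by
      intro j l
      rw [← hB, B.repr_self, Finsupp.single_apply]
    have hrepr : ∀ k l, B.repr (T x (B.coord k)) l = c (k, l) - c (l, k) := by
      intro k l
      have h1 : T x (B.coord k) = ∑ p : ι × ι,
          c p • ((B.coord k) (v p.1) • v p.2 - (B.coord k) (v p.2) • v p.1) := by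
        rw [hxsub, map_sum, LinearMap.sum_apply]
        refine Finset.sum_congr rfl fun p _ => ?_
        rw [map_smul, LinearMap.smul_apply, hT]
      rw [h1, map_sum, Finsupp.coe_finset_sum, Finset.sum_apply]
      have h2 : ∀ p : ι × ι, (B.repr (c p • ((B.coord k) (v p.1) • v p.2
          - (B.coord k) (v p.2) • v p.1))) l
          = c p * ((if p.1 = k then 1 else 0) * (if p.2 = l then 1 else 0)
            - (if p.2 = k then 1 else 0) * (if p.1 = l then 1 else 0)) := by
        intro p
        rw [hδ, hδ]
        simp only [map_smul, map_sub, Finsupp.smul_apply, Finsupp.sub_apply, hreprv,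
          smul_eq_mul]
        try split_ifs <;> ring
      rw [Finset.sum_congr rfl fun p _ => h2 p, Fintype.sum_prod_type]
      simp [mul_sub, ite_mul, mul_ite, Finset.sum_sub_distrib,
        @Finset.sum_ite_eq ι K _ (Module.Free.instDecidableEqChooseBasisIndex W' A),
        @Finset.sum_ite_eq' ι K _ (Module.Free.instDecidableEqChooseBasisIndex W' A)]
    have hd : ∀ k l, c (k, l) - c (l, k) ∈ Set.range (algebraMap W' K) := by
      intro k l
      rw [← hrepr k l]
      exact hcoord _ (hx (B.coord k) (hdual k)) l
    -- symmetrize the coefficients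
    let c' : ι × ι → K := fun p => if p.1 < p.2 then c p - c p.swap else 0
    have hx2 : x = ∑ p : ι × ι, c' p • wedge2 K N' (v p.1) (v p.2) := by
      rw [hxsub, ← sub_eq_zero, ← Finset.sum_sub_distrib]
      refine Finset.sum_ninvolution Prod.swap ?_ ?_ (fun _ => Finset.mem_univ _)
        (fun p => Prod.swap_swap p)
      · intro p
        rcases lt_trichotomy p.1 p.2 with h | h | h
        · have hns : ¬ p.swap.1 < p.swap.2 := not_lt_of_gt h
          have hw : wedge2 K N' (v p.swap.1) (v p.swap.2) = - wedge2 K N' (v p.1) (v p.2) :=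
            wedge2_swap K N' (v p.1) (v p.2)
          simp only [c', if_pos h, if_neg hns, Prod.swap_swap, hw]
          ring_nf
          module
        · have h0 : v p.1 = v p.2 := by rw [h]
          have hps : p.swap = p := by
            ext
            · exact h.symm
            · exact h
          simp only [c', hps, h0, wedge2_same, lt_irrefl, h, if_neg (lt_irrefl p.2)]
          simp
        · have hns : ¬ p.1 < p.2 := not_lt_of_gt h
          have hs : p.swap.1 < p.swap.2 := h
          have hw : wedge2 K N' (v p.1) (v p.2) = - wedge2 K N' (v p.swap.1) (v p.swap.2) :=
            wedge2_swap K N' (v p.swap.1) (v p.swap.2)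
          simp only [c', if_neg hns, if_pos hs, Prod.swap_swap, hw]
          ring_nf
          module
      · intro p hp hps
        apply hp
        have h1 : p.1 = p.2 := congrArg Prod.fst hps.symm
        have h0 : v p.1 = v p.2 := by rw [h1]
        have hlt : ¬ p.1 < p.2 := by rw [h1]; exact lt_irrefl _
        simp [c', if_neg hlt, h0, wedge2_same]
    -- conclude
    rw [hx2]
    refine Submodule.sum_mem _ fun p _ => ?_
    have hcp : c' p ∈ Set.range (algebraMap W' K) := by
      by_cases h : p.1 < p.2
      · have := hd p.1 p.2
        simpa [c', if_pos h, Prod.swap] using this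
      · exact ⟨0, by simp [c', if_neg h]⟩
    obtain ⟨w, hw⟩ := hcp
    rw [← hw, algebraMap_smul]
    exact Submodule.smul_mem _ _
      (Submodule.subset_span ⟨v p.1, hvA _, v p.2, hvA _, rfl⟩)
  · -- easy direction
    intro hx f hf
    refine Submodule.span_induction (p := fun y _ => T y f ∈ A) ?_ ?_ ?_ ?_ hx
    · rintro y ⟨a, ha, b, hb, rfl⟩
      obtain ⟨wa, hwa⟩ := hf a ha
      obtain ⟨wb, hwb⟩ := hf b hb
      rw [hT, ← hwa, ← hwb, algebraMap_smul, algebraMap_smul]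
      exact sub_mem (A.smul_mem wa hb) (A.smul_mem wb ha)
    · simp
    · intro y z _ _ hy hz
      rw [map_add, LinearMap.add_apply]
      exact add_mem hy hz
    · intro w y _ hy
      rw [← algebraMap_smul K w y, map_smul, LinearMap.smul_apply, algebraMap_smul]
      exact A.smul_mem w hy
end

section
/- Let W' be a discrete valuation ring with uniformizer p and fraction field W'_Q, let N' be a 4-dimensional W'_Q-vector space with a fixed full-rank lattice M, and define the height of a lattice A ⊆ N' as the integer i with ⋀^4 A = p^i ⋀^4 M inside ⋀^4 N'. Define a bilinear form on V' = ⋀^2 N' by [x,y]ω = x∧y for a generator ω of ⋀^4 M. Then for a lattice A ⊆ N' of height 2i and an integer m, the lattice p^m ⋀^2 A ⊆ V' is self-dual with respect to [·,·] if and only if m = -i. -/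
set_option linter.unusedSectionVars false
set_option maxHeartbeats 1000000
set_option synthInstance.maxHeartbeats 400000
namespace Aux
variable {K : Type*} [Field K] {N : Type*} [AddCommGroup N] [Module K N]
open ExteriorAlgebra

def pr : Fin 6 → Fin 4 × Fin 4 := ![(0,1),(0,2),(0,3),(1,2),(1,3),(2,3)]
def sigc : Fin 6 → Fin 6 := ![5,4,3,2,1,0]
def eps : Fin 6 → ℤ := ![1,-1,1,1,-1,1]
def ez (a b : Fin 6) : ℤ := if b = sigc a then eps a else 0

lemma iM2_diag (x : N) : ιMulti K 2 ![x, x] = 0 :=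
  AlternatingMap.map_eq_zero_of_eq _ _ (by simp) (show (0:Fin 2) ≠ 1 by decide)

lemma iM2_comm (a b : N) : ιMulti K 2 ![b, a] = - ιMulti K 2 ![a, b] := by
  have h : ![a,b] ∘ Equiv.swap (0:Fin 2) 1 = ![b,a] := by
    funext i; fin_cases i <;> simp [Equiv.swap_apply_def]
  have := AlternatingMap.map_swap (ιMulti K 2 (M:=N)) ![a,b] (i := 0) (j := 1) (by decide)
  rw [h] at this
  rw [this]

lemma upd0 (a b x : N) : Function.update ![a,b] 0 x = ![x,b] := by
  funext i; fin_cases i <;> simp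
lemma upd1 (a b x : N) : Function.update ![a,b] 1 x = ![a,x] := by
  funext i; fin_cases i <;> simp

lemma iM2_add_left (a a' b : N) :
    ιMulti K 2 ![a + a', b] = ιMulti K 2 ![a,b] + ιMulti K 2 ![a',b] := by
  have := MultilinearMap.map_update_add ((ιMulti K 2 (M:=N)).toMultilinearMap) ![a,b] 0 a a'
  simpa [upd0] using this

lemma iM2_add_right (a b b' : N) :
    ιMulti K 2 ![a, b + b'] = ιMulti K 2 ![a,b] + ιMulti K 2 ![a,b'] := by
  have := MultilinearMap.map_update_add ((ιMulti K 2 (M:=N)).toMultilinearMap) ![a,b] 1 b b'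
  simpa [upd1] using this

lemma iM2_smul_left (r : K) (a b : N) :
    ιMulti K 2 ![r • a, b] = r • ιMulti K 2 ![a,b] := by
  have := MultilinearMap.map_update_smul ((ιMulti K 2 (M:=N)).toMultilinearMap) ![a,b] 0 r a
  simpa [upd0] using this

lemma iM2_smul_right (r : K) (a b : N) :
    ιMulti K 2 ![a, r • b] = r • ιMulti K 2 ![a,b] := by
  have := MultilinearMap.map_update_smul ((ιMulti K 2 (M:=N)).toMultilinearMap) ![a,b] 1 r b
  simpa [upd1] using this

lemma mul_iM (a b c d : N) :
    (ιMulti K 2 ![a,b] : ExteriorAlgebra K N) * (ιMulti K 2 ![c,d]) = ιMulti K 4 ![a,b,c,d] := by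
  simp only [ιMulti_apply]
  simp [List.ofFn_succ, mul_assoc]

lemma tuple_comp (E : Fin 4 → N) (a b c d : Fin 4) :
    ![E a, E b, E c, E d] = E ∘ ![a, b, c, d] := by
  funext x; fin_cases x <;> rfl

lemma iM4_zero (E : Fin 4 → N) (g : Fin 4 → Fin 4) (h : ¬ Function.Injective g) :
    ιMulti K 4 (E ∘ g) = 0 := by
  simp only [Function.not_injective_iff] at h
  obtain ⟨x, y, hxy, hne⟩ := h
  exact AlternatingMap.map_eq_zero_of_eq _ _ (by simp [Function.comp, hxy]) hne

lemma iM4_sign (E : Fin 4 → N) (g : Fin 4 → Fin 4) (hg : Function.Bijective g) :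
    ιMulti K 4 (E ∘ g) =
      ((Equiv.Perm.sign (⟨g, Fintype.bijInv hg, Fintype.leftInverse_bijInv hg,
        Fintype.rightInverse_bijInv hg⟩ : Equiv.Perm (Fin 4)) : ℤˣ) : ℤ) • ιMulti K 4 E := by
  have := AlternatingMap.map_perm (ιMulti K 4 (M:=N)) E
    (⟨g, Fintype.bijInv hg, Fintype.leftInverse_bijInv hg, Fintype.rightInverse_bijInv hg⟩ :
      Equiv.Perm (Fin 4))
  rw [show ((⟨g, Fintype.bijInv hg, Fintype.leftInverse_bijInv hg,
        Fintype.rightInverse_bijInv hg⟩ : Equiv.Perm (Fin 4)) : Fin 4 → Fin 4) = g from rfl] at this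
  rw [this, Units.smul_def]

lemma pairing (E : Fin 4 → N) (a b : Fin 6) :
    (ιMulti K 2 ![E (pr a).1, E (pr a).2] : ExteriorAlgebra K N) *
        ιMulti K 2 ![E (pr b).1, E (pr b).2]
      = ez a b • ιMulti K 4 ![E 0, E 1, E 2, E 3] := by
  fin_cases a <;> fin_cases b <;>
    simp only [pr, ez, sigc, eps, Matrix.cons_val_zero, Matrix.cons_val_one, Matrix.head_cons,
      Matrix.cons_val_two, Matrix.cons_val_three, Matrix.tail_cons, Fin.isValue,
        Fin.reduceEq, ↓reduceIte] <;>
    rw [mul_iM, tuple_comp] <;>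
    first
      | (rw [iM4_zero _ _ (by decide)]; exact (zero_smul ℤ _).symm)
      | (rw [iM4_sign _ _ (by decide)]; congr 1)

section R
variable {R : Type*} [CommRing R] [Algebra R K] [Module R N] [IsScalarTower R K N]

lemma gen_mem (e : Fin 4 → N) (i j : Fin 4) :
    ιMulti K 2 ![e i, e j] ∈ Submodule.span R
      (Set.range (fun s => (ιMulti K 2 ![e (pr s).1, e (pr s).2] : ExteriorAlgebra K N))) := by
  fin_cases i <;> fin_cases j <;>
    first
      | (rw [iM2_diag]; exact zero_mem _)
      | (apply Submodule.subset_span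
         first | exact ⟨0, rfl⟩ | exact ⟨1, rfl⟩ | exact ⟨2, rfl⟩ | exact ⟨3, rfl⟩
               | exact ⟨4, rfl⟩ | exact ⟨5, rfl⟩)
      | (rw [iM2_comm]; refine neg_mem (Submodule.subset_span ?_)
         first | exact ⟨0, rfl⟩ | exact ⟨1, rfl⟩ | exact ⟨2, rfl⟩ | exact ⟨3, rfl⟩
               | exact ⟨4, rfl⟩ | exact ⟨5, rfl⟩)

lemma key2 (e : Fin 4 → N) {a b : N} (ha : a ∈ Submodule.span R (Set.range e))
    (hb : b ∈ Submodule.span R (Set.range e)) :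
    ιMulti K 2 ![a, b] ∈ Submodule.span R
      (Set.range (fun s => (ιMulti K 2 ![e (pr s).1, e (pr s).2] : ExteriorAlgebra K N))) := by
  induction ha, hb using Submodule.span_induction₂ with
  | mem_mem x y hx hy =>
      obtain ⟨i, rfl⟩ := hx; obtain ⟨j, rfl⟩ := hy; exact gen_mem e i j
  | zero_left y hy =>
      rw [(ιMulti K 2 (M:=N)).map_coord_zero (m := ![0, y]) 0 (by simp)]; exact zero_mem _
  | zero_right x hx =>
      rw [(ιMulti K 2 (M:=N)).map_coord_zero (m := ![x, 0]) 1 (by simp)]; exact zero_mem _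
  | add_left x y z _ _ _ h1 h2 => rw [iM2_add_left]; exact add_mem h1 h2
  | add_right x y z _ _ _ h1 h2 => rw [iM2_add_right]; exact add_mem h1 h2
  | smul_left r x y _ _ h => 
      rw [show r • x = (algebraMap R K r) • x from (algebraMap_smul K r x).symm, iM2_smul_left,
        algebraMap_smul]
      exact Submodule.smul_mem _ r h
  | smul_right r x y _ _ h =>
      rw [show r • y = (algebraMap R K r) • y from (algebraMap_smul K r y).symm, iM2_smul_right,
        algebraMap_smul]
      exact Submodule.smul_mem _ r h

lemma key4 (e : Fin 4 → N) {x y : ExteriorAlgebra K N}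
    (hx : x ∈ Submodule.span R
      (Set.range (fun s => (ιMulti K 2 ![e (pr s).1, e (pr s).2] : ExteriorAlgebra K N))))
    (hy : y ∈ Submodule.span R
      (Set.range (fun s => (ιMulti K 2 ![e (pr s).1, e (pr s).2] : ExteriorAlgebra K N)))) :
    x * y ∈ Submodule.span R {(ιMulti K 4 ![e 0, e 1, e 2, e 3] : ExteriorAlgebra K N)} := by
  induction hx, hy using Submodule.span_induction₂ with
  | mem_mem x y hx hy =>
      obtain ⟨a, rfl⟩ := hx; obtain ⟨b, rfl⟩ := hy
      rw [pairing]
      exact (Submodule.span R {(ιMulti K 4 ![e 0, e 1, e 2, e 3] :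
        ExteriorAlgebra K N)}).toAddSubgroup.zsmul_mem (Submodule.subset_span rfl) _
  | zero_left y hy => rw [zero_mul]; exact zero_mem _
  | zero_right x hx => rw [mul_zero]; exact zero_mem _
  | add_left x y z _ _ _ h1 h2 => rw [add_mul]; exact add_mem h1 h2
  | add_right x y z _ _ _ h1 h2 => rw [mul_add]; exact add_mem h1 h2
  | smul_left r x y _ _ h => rw [smul_mul_assoc]; exact Submodule.smul_mem _ r h
  | smul_right r x y _ _ h => rw [mul_smul_comm]; exact Submodule.smul_mem _ r h

end R

lemma tuple2_eta (v : Fin 2 → N) : ![v 0, v 1] = v := by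
  funext i; fin_cases i <;> rfl

lemma span_wext_top (e : Fin 4 → N) (hsp : Submodule.span K (Set.range e) = ⊤) :
    Submodule.span K
      (Set.range (fun s => (ιMulti K 2 ![e (pr s).1, e (pr s).2] : ExteriorAlgebra K N)))
      = ⋀[K]^2 N := by
  apply le_antisymm
  · rw [Submodule.span_le]
    rintro x ⟨s, rfl⟩
    exact ιMulti_range K 2 ⟨_, rfl⟩
  · rw [← ιMulti_span_fixedDegree, Submodule.span_le]
    rintro x ⟨v, rfl⟩
    rw [← tuple2_eta v]
    exact key2 e (hsp ▸ Submodule.mem_top) (hsp ▸ Submodule.mem_top)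

lemma smul_cancel {V : Type*} [AddCommGroup V] [Module K V] {a b : K} {x : V} (hx : x ≠ 0)
    (h : a • x = b • x) : a = b := by
  have h2 : (a - b) • x = 0 := by rw [sub_smul, h, sub_self]
  rcases smul_eq_zero.mp h2 with h1 | h1
  · exact sub_eq_zero.mp h1
  · exact absurd h1 hx

end Aux

section
variable (W' : Type*) [CommRing W'] [IsDomain W'] [IsDiscreteValuationRing W']
    (K : Type*) [Field K] [Algebra W' K] [IsFractionRing W' K]
    (N' : Type*) [AddCommGroup N'] [Module K N'] [Module W' N'] [IsScalarTower W' K N']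

/-- From a finitely generated full lattice, extract a 4-element family that is a `W'`-spanning
set of the lattice and a `K`-basis family of the space. -/
theorem exists_lattice_basis (hdim : Module.finrank K N' = 4)
    (A : Submodule W' N') (hAfg : A.FG) (hAfull : Submodule.span K (A : Set N') = ⊤) :
    ∃ e : Fin 4 → N', Submodule.span W' (Set.range e) = A ∧
      LinearIndependent K e ∧ Submodule.span K (Set.range e) = ⊤ := by
  have hinj : Function.Injective (algebraMap W' K) := IsFractionRing.injective W' K
  have hnzsd : NoZeroSMulDivisors W' N' := by
    constructor
    intro a x h
    rcases eq_or_ne a 0 with rfl | ha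
    · exact Or.inl rfl
    · refine Or.inr ?_
      have : (algebraMap W' K a) • x = 0 := by rwa [algebraMap_smul]
      have ha' : algebraMap W' K a ≠ 0 := fun h0 => ha (hinj (by simpa using h0))
      rcases smul_eq_zero.mp this with h1 | h2
      · exact absurd h1 ha'
      · exact h2
  haveI : NoZeroSMulDivisors W' A :=
    Function.Injective.noZeroSMulDivisors A.subtype Subtype.val_injective rfl (fun _ _ => rfl)
  haveI : Module.Finite W' A := Module.Finite.iff_fg.mpr hAfg
  haveI : Module.Free W' A := Module.free_of_finite_type_torsion_free'
  set ι := Module.Free.ChooseBasisIndex W' ↥A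
  let b : Module.Basis ι W' ↥A := Module.Free.chooseBasis W' ↥A
  let eA : ι → N' := fun j => (b j : N')
  have heAind : LinearIndependent W' eA :=
    b.linearIndependent.map' A.subtype (Submodule.ker_subtype A)
  have heAindK : LinearIndependent K eA := (LinearIndependent.iff_fractionRing W' K).mp heAind
  have heAspan : Submodule.span W' (Set.range eA) = A := by
    have : Set.range eA = A.subtype '' Set.range b := by
      rw [← Set.range_comp]; rfl
    rw [this, Submodule.span_image, b.span_eq, Submodule.map_top, Submodule.range_subtype]
  have heAspanK : Submodule.span K (Set.range eA) = ⊤ := by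
    rw [eq_top_iff, ← hAfull]
    rw [Submodule.span_le]
    intro x hx
    have : x ∈ Submodule.span W' (Set.range eA) := heAspan ▸ hx
    have h2 := Submodule.span_subset_span W' K (Set.range eA) this
    exact h2
  haveI : Fintype ι := Module.Free.ChooseBasisIndex.fintype W' ↥A
  have hcard : Fintype.card ι = 4 := by
    let bK : Module.Basis ι K N' := Module.Basis.mk heAindK (by rw [heAspanK])
    rw [← Module.finrank_eq_card_basis bK, hdim]
  let σ : Fin 4 ≃ ι := (Fintype.equivFinOfCardEq hcard).symm
  refine ⟨eA ∘ σ, ?_, heAindK.comp σ σ.injective, ?_⟩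
  · rw [Set.range_comp, σ.surjective.range_eq, Set.image_univ, heAspan]
  · rw [Set.range_comp, σ.surjective.range_eq, Set.image_univ, heAspanK]
end



/-- The wedge `a ∧ b ∧ c ∧ d` as an element of the fourth exterior power. -/
noncomputable def wedge4 (K : Type*) [Field K] (N : Type*) [AddCommGroup N] [Module K N]
    (a b c d : N) : ⋀[K]^4 N :=
  ⟨ExteriorAlgebra.ιMulti K 4 ![a, b, c, d],
    ExteriorAlgebra.ιMulti_range K 4 ⟨![a, b, c, d], rfl⟩⟩

/-- `⋀⁴ A` for a `W'`-submodule `A ⊆ N`. -/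
noncomputable def lambda4 (W' K : Type*) [CommRing W'] [Field K] [Algebra W' K]
    (N : Type*) [AddCommGroup N] [Module K N] [Module W' N] [IsScalarTower W' K N]
    (A : Submodule W' N) : Submodule W' (⋀[K]^4 N) :=
  Submodule.span W'
    {w : ⋀[K]^4 N | ∃ a ∈ A, ∃ b ∈ A, ∃ c ∈ A, ∃ d ∈ A, w = wedge4 K N a b c d}

/-- Scaling a `W'`-submodule of a `K`-vector space by a scalar `c : K`. -/
noncomputable def scaleSub (W' K : Type*) [CommRing W'] [Field K] [Algebra W' K]
    (V : Type*) [AddCommGroup V] [Module K V] [Module W' V] [IsScalarTower W' K V]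
    (c : K) (L : Submodule W' V) : Submodule W' V :=
  Submodule.map (LinearMap.restrictScalars W' (c • (LinearMap.id : V →ₗ[K] V))) L

theorem stmt_7 (W' : Type*) [CommRing W'] [IsDomain W'] [IsDiscreteValuationRing W']
    (π : W') (hπ : Irreducible π)
    (K : Type*) [Field K] [Algebra W' K] [IsFractionRing W' K]
    (N' : Type*) [AddCommGroup N'] [Module K N'] [Module W' N'] [IsScalarTower W' K N']
    (hdim : Module.finrank K N' = 4)
    -- the fixed full reference lattice M, and a generator ω of ⋀⁴ M
    (M : Submodule W' N') (hMfg : M.FG) (hMfull : Submodule.span K (M : Set N') = ⊤)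
    (ω : ⋀[K]^4 N') (hω : lambda4 W' K N' M = Submodule.span W' {ω})
    -- the bilinear form [x,y] on ⋀² N' defined by x ∧ y = [x,y] • ω
    (B : LinearMap.BilinForm K (⋀[K]^2 N'))
    (hB : ∀ x y : ⋀[K]^2 N',
      (x : ExteriorAlgebra K N') * (y : ExteriorAlgebra K N')
        = B x y • (ω : ExteriorAlgebra K N'))
    -- A is a full lattice of height 2i
    (A : Submodule W' N') (hAfg : A.FG) (hAfull : Submodule.span K (A : Set N') = ⊤)
    (i : ℤ)
    (hheight : lambda4 W' K N' A
      = scaleSub W' K (⋀[K]^4 N') ((algebraMap W' K π) ^ (2 * i)) (lambda4 W' K N' M))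
    (m : ℤ) :
    -- `π^m ⋀² A` is self-dual iff `m = -i`
    ({v : ⋀[K]^2 N' |
        ∀ u ∈ scaleSub W' K (⋀[K]^2 N') ((algebraMap W' K π) ^ m) (lambda2 W' K N' A),
          B v u ∈ Set.range (algebraMap W' K)}
      = ↑(scaleSub W' K (⋀[K]^2 N') ((algebraMap W' K π) ^ m) (lambda2 W' K N' A)))
      ↔ m = -i := by
  classical
  obtain ⟨e, hA, heK, hsp⟩ := exists_lattice_basis W' K N' hdim A hAfg hAfull
  have hinj : Function.Injective (algebraMap W' K) := IsFractionRing.injective W' K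
  set c : K := algebraMap W' K π with hc_def
  have hc : c ≠ 0 := fun h => hπ.ne_zero (hinj (by simpa [hc_def] using h))
  -- the six wedge products of basis vectors
  set wext : Fin 6 → ExteriorAlgebra K N' :=
    fun s => ExteriorAlgebra.ιMulti K 2 ![e (Aux.pr s).1, e (Aux.pr s).2] with hwext_def
  set w : Fin 6 → ⋀[K]^2 N' := fun s => wedge2 K N' (e (Aux.pr s).1) (e (Aux.pr s).2) with hw_def
  have hwco : ∀ s, (w s : ExteriorAlgebra K N') = wext s := fun s => rfl
  set Ωe : ExteriorAlgebra K N' := ExteriorAlgebra.ιMulti K 4 ![e 0, e 1, e 2, e 3] with hΩe_def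
  set Ω : ⋀[K]^4 N' := wedge4 K N' (e 0) (e 1) (e 2) (e 3) with hΩ_def
  have hΩco : (Ω : ExteriorAlgebra K N') = Ωe := rfl
  -- Ωe ≠ 0
  have hΩe0 : Ωe ≠ 0 := by
    intro h0
    let eK : Module.Basis (Fin 4) K N' := Module.Basis.mk heK (by rw [hsp])
    have hek : ∀ x, eK x = e x := fun x => Module.Basis.mk_apply heK _ x
    let F : ∀ n : ℕ, N' [⋀^Fin n]→ₗ[K] K := fun n => match n with | 4 => eK.det | _ => 0
    have h1 : ExteriorAlgebra.liftAlternating F Ωe = eK.det ![e 0, e 1, e 2, e 3] := by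
      rw [hΩe_def, ExteriorAlgebra.liftAlternating_apply_ιMulti]; rfl
    have h2 : ![e 0, e 1, e 2, e 3] = ⇑eK := by
      funext x; fin_cases x <;> rw [hek] <;> rfl
    rw [h2, Module.Basis.det_self, h0, map_zero] at h1
    exact one_ne_zero h1.symm
  -- lattice identifications
  have hlam2 : lambda2 W' K N' A = Submodule.span W' (Set.range w) := by
    apply Submodule.map_injective_of_injective
      (f := (Submodule.subtype (⋀[K]^2 N')).restrictScalars W') Subtype.val_injective
    unfold lambda2
    rw [Submodule.map_span, Submodule.map_span]
    have hrange : (⇑((Submodule.subtype (⋀[K]^2 N')).restrictScalars W') '' Set.range w)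
        = Set.range wext := by rw [← Set.range_comp]; rfl
    rw [hrange]
    apply le_antisymm
    · rw [Submodule.span_le]
      rintro x ⟨y, ⟨a, ha, b, hb, rfl⟩, rfl⟩
      exact Aux.key2 (R := W') e (by rw [hA]; exact ha) (by rw [hA]; exact hb)
    · rw [Submodule.span_le]
      rintro x ⟨s, rfl⟩
      apply Submodule.subset_span
      refine ⟨wedge2 K N' (e (Aux.pr s).1) (e (Aux.pr s).2),
        ⟨_, by rw [← hA]; exact Submodule.subset_span ⟨_, rfl⟩,
         _, by rw [← hA]; exact Submodule.subset_span ⟨_, rfl⟩, rfl⟩, rfl⟩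
  have hlam4 : lambda4 W' K N' A = Submodule.span W' {Ω} := by
    apply Submodule.map_injective_of_injective
      (f := (Submodule.subtype (⋀[K]^4 N')).restrictScalars W') Subtype.val_injective
    unfold lambda4
    rw [Submodule.map_span, Submodule.map_span, Set.image_singleton]
    have hΩi : ((Submodule.subtype (⋀[K]^4 N')).restrictScalars W') Ω = Ωe := rfl
    rw [hΩi]
    apply le_antisymm
    · rw [Submodule.span_le]
      rintro x ⟨y, ⟨a, ha, b, hb, cc, hcc, d, hd, rfl⟩, rfl⟩
      have hx : ((Submodule.subtype (⋀[K]^4 N')).restrictScalars W') (wedge4 K N' a b cc d)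
          = ExteriorAlgebra.ιMulti K 4 ![a, b, cc, d] := rfl
      rw [hx, ← Aux.mul_iM]
      exact Aux.key4 (R := W') e
        (Aux.key2 (R := W') e (by rw [hA]; exact ha) (by rw [hA]; exact hb))
        (Aux.key2 (R := W') e (by rw [hA]; exact hcc) (by rw [hA]; exact hd))
    · rw [Submodule.span_le, Set.singleton_subset_iff]
      apply Submodule.subset_span
      refine ⟨wedge4 K N' (e 0) (e 1) (e 2) (e 3),
        ⟨_, by rw [← hA]; exact Submodule.subset_span ⟨_, rfl⟩,
         _, by rw [← hA]; exact Submodule.subset_span ⟨_, rfl⟩,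
         _, by rw [← hA]; exact Submodule.subset_span ⟨_, rfl⟩,
         _, by rw [← hA]; exact Submodule.subset_span ⟨_, rfl⟩, rfl⟩, rfl⟩
  -- height: comparison of Ω with ω
  obtain ⟨r0, s0, hr0s0, hΩω⟩ :
      ∃ r0 s0 : W', r0 * s0 = 1 ∧
        (Ω : ExteriorAlgebra K N')
          = (algebraMap W' K r0 * c ^ (2*i)) • (ω : ExteriorAlgebra K N') := by
    have h5 : Submodule.span W' {Ω} = Submodule.span W' {((c ^ (2*i)) • ω : ⋀[K]^4 N')} := by
      rw [← hlam4, hheight, hω, scaleSub, Submodule.map_span, Set.image_singleton]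
      rfl
    obtain ⟨r0, hr0⟩ := Submodule.mem_span_singleton.mp (h5 ▸ Submodule.mem_span_singleton_self Ω)
    obtain ⟨s0, hs0⟩ := Submodule.mem_span_singleton.mp
      (h5.symm ▸ Submodule.mem_span_singleton_self ((c ^ (2*i)) • ω : ⋀[K]^4 N'))
    have h6 : (r0 * s0) • Ω = (1:W') • Ω := by rw [one_smul, mul_smul, hs0, hr0]
    have hΩne : Ω ≠ 0 := fun h => hΩe0 (by rw [← hΩco, h, ZeroMemClass.coe_zero])
    have h7 : (algebraMap W' K (r0*s0)) • Ω = (algebraMap W' K 1) • Ω := by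
      calc (algebraMap W' K (r0*s0)) • Ω = (r0*s0) • Ω := algebraMap_smul K _ _
        _ = (1:W') • Ω := h6
        _ = (algebraMap W' K 1) • Ω := (algebraMap_smul K _ _).symm
    have h8 : r0 * s0 = 1 := by
      have := Aux.smul_cancel hΩne h7
      exact hinj (by rw [this, map_one])
    refine ⟨r0, s0, h8, ?_⟩
    have h9 := congrArg Subtype.val hr0
    rw [← h9]
    calc ((r0 • ((c ^ (2*i)) • ω) : ⋀[K]^4 N') : ExteriorAlgebra K N')
        = r0 • ((c ^ (2*i)) • (ω : ExteriorAlgebra K N')) := rfl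
      _ = (algebraMap W' K r0) • ((c ^ (2*i)) • (ω : ExteriorAlgebra K N')) :=
          (algebraMap_smul K _ _).symm
      _ = (algebraMap W' K r0 * c ^ (2*i)) • (ω : ExteriorAlgebra K N') := (mul_smul _ _ _).symm
  set q : K := algebraMap W' K r0 * c ^ (2*i) with hq_def
  have hωe0 : (ω : ExteriorAlgebra K N') ≠ 0 := by
    intro h
    exact hΩe0 (by rw [← hΩco, hΩω, h, smul_zero])
  have hq0 : q ≠ 0 := by
    intro h
    exact hΩe0 (by rw [← hΩco, hΩω, h, zero_smul])
  -- values of the bilinear form on the basis wedges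
  have hBw : ∀ a b : Fin 6,
      B (w a) (w b) = algebraMap W' K ((Aux.ez a b : ℤ) : W') * q := by
    intro a b
    have h1 := hB (w a) (w b)
    rw [hwco, hwco, Aux.pairing e a b, ← hΩe_def] at h1
    have h2 : (Aux.ez a b : ℤ) • Ωe = (algebraMap W' K ((Aux.ez a b : ℤ) : W') * q) •
        (ω : ExteriorAlgebra K N') := by
      rw [← hΩco, hΩω, ← Int.cast_smul_eq_zsmul K, smul_smul, map_intCast]
    rw [h2] at h1
    exact Aux.smul_cancel hωe0 h1.symm
  -- the six wedges span ⋀² N' over K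
  have hspan6 : Submodule.span K (Set.range w) = ⊤ := by
    have h1 : Submodule.span K (Set.range wext)
        = (⋀[K]^2 N' : Submodule K (ExteriorAlgebra K N')) := Aux.span_wext_top e hsp
    apply Submodule.map_injective_of_injective
      (f := Submodule.subtype (⋀[K]^2 N')) Subtype.val_injective
    rw [Submodule.map_span, Submodule.map_top, Submodule.range_subtype]
    rw [show (⇑(Submodule.subtype (⋀[K]^2 N')) '' Set.range w) = Set.range wext from by
      rw [← Set.range_comp]; rfl]
    exact h1
  set epsW : Fin 6 → W' := fun s => ((Aux.eps s : ℤ) : W') with hepsW_def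
  have hdec1 : ∀ s : Fin 6, Aux.ez (Aux.sigc s) s = Aux.eps (Aux.sigc s) := by decide
  have hdec2 : ∀ t s : Fin 6, t ≠ Aux.sigc s → Aux.ez t s = 0 := by decide
  have hdec3 : ∀ s : Fin 6, Aux.sigc (Aux.sigc s) = s := by decide
  have hdec4 : ∀ s : Fin 6, Aux.eps s = 1 ∨ Aux.eps s = -1 := by decide
  have hepsunit : ∀ s, epsW s * epsW s = 1 := by
    intro s
    rcases hdec4 s with h | h <;> simp only [hepsW_def, h] <;> push_cast <;> ring
  have hBsum : ∀ (g : Fin 6 → K) (s : Fin 6),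
      B (∑ t, g t • w t) (w s)
        = g (Aux.sigc s) * (algebraMap W' K (epsW (Aux.sigc s)) * q) := by
    intro g s
    rw [map_sum, LinearMap.sum_apply]
    rw [Finset.sum_eq_single (Aux.sigc s)]
    · rw [map_smul, LinearMap.smul_apply, smul_eq_mul, hBw,
        hdec1 s]
    · intro t _ hts
      rw [map_smul, LinearMap.smul_apply, smul_eq_mul, hBw,
        hdec2 t s hts,
        Int.cast_zero, map_zero, zero_mul, mul_zero]
    · intro h; exact absurd (Finset.mem_univ _) h
  have hind6 : LinearIndependent K w := by
    rw [Fintype.linearIndependent_iff]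
    intro g hg s
    have h1 : B (∑ t, g t • w t) (w (Aux.sigc s)) = 0 := by
      rw [hg, map_zero, LinearMap.zero_apply]
    rw [hBsum g (Aux.sigc s), hdec3 s] at h1
    have heps0 : algebraMap W' K (epsW s) ≠ 0 := by
      intro h0
      have h2 : epsW s = 0 := hinj (by rw [h0, map_zero])
      have h3 : epsW s * epsW s = 1 := hepsunit s
      rw [h2, mul_zero] at h3
      exact zero_ne_one h3
    rcases mul_eq_zero.mp h1 with h2 | h2
    · exact h2
    · exact absurd h2 (mul_ne_zero heps0 hq0)
  set b6 : Module.Basis (Fin 6) K (⋀[K]^2 N') := Module.Basis.mk hind6 (by rw [hspan6]) with hb6_def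
  have hb6 : ∀ s, b6 s = w s := fun s => Module.Basis.mk_apply hind6 _ s
  have hrepr : ∀ (v : ⋀[K]^2 N') (s : Fin 6),
      B v (w s) = b6.repr v (Aux.sigc s) * (algebraMap W' K (epsW (Aux.sigc s)) * q) := by
    intro v s
    conv_lhs => rw [← Module.Basis.sum_repr b6 v]
    simp only [hb6]
    exact hBsum _ s
  have hreprscaled : ∀ (t : K) (s' s : Fin 6),
      b6.repr (t • w s') s = t * (if s' = s then 1 else 0) := by
    intro t s' s
    rw [← hb6 s', map_smul, Finsupp.smul_apply, Module.Basis.repr_self, smul_eq_mul,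
      Finsupp.single_apply]
  -- the scaled lattice
  set t0 : K := c ^ m with ht0_def
  have ht0 : t0 ≠ 0 := zpow_ne_zero _ hc
  have honem : c ^ m * c ^ (-m) = 1 := by
    rw [← zpow_add₀ hc, add_neg_cancel, zpow_zero]
  have hLm : scaleSub W' K (⋀[K]^2 N') (c ^ m) (lambda2 W' K N' A)
      = Submodule.span W' (Set.range fun s => t0 • w s) := by
    rw [hlam2, scaleSub, Submodule.map_span, ← Set.range_comp]
    rfl
  have hmemL : ∀ x : ⋀[K]^2 N', x ∈ Submodule.span W' (Set.range fun s => t0 • w s)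
      ↔ ∀ s, ∃ r : W', c ^ (-m) * b6.repr x s = algebraMap W' K r := by
    intro x
    constructor
    · intro hx
      induction hx using Submodule.span_induction with
      | mem y hy =>
          obtain ⟨s', rfl⟩ := hy
          intro s
          rw [hreprscaled]
          by_cases hss : s' = s
          · refine ⟨1, ?_⟩
            rw [if_pos hss, mul_one, map_one, mul_comm]
            exact honem
          · exact ⟨0, by rw [if_neg hss, mul_zero, mul_zero, map_zero]⟩
      | zero =>
          intro s
          refine ⟨0, ?_⟩
          rw [map_zero, map_zero, Finsupp.coe_zero, Pi.zero_apply, mul_zero]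
      | add y z _ _ h1 h2 =>
          intro s
          obtain ⟨r1, e1⟩ := h1 s
          obtain ⟨r2, e2⟩ := h2 s
          exact ⟨r1 + r2, by rw [map_add, Finsupp.add_apply, mul_add, e1, e2, map_add]⟩
      | smul r y _ h1 =>
          intro s
          obtain ⟨r1, e1⟩ := h1 s
          refine ⟨r * r1, ?_⟩
          have hry : b6.repr (r • y) s = algebraMap W' K r * b6.repr y s := by
            rw [show (r • y) = (algebraMap W' K r) • y from (algebraMap_smul K _ _).symm,
              map_smul, Finsupp.smul_apply, smul_eq_mul]
          rw [hry, mul_left_comm, e1, ← map_mul]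
    · intro hx
      choose r hr using hx
      have hxsum : x = ∑ s, b6.repr x s • w s := by
        have h0 := Module.Basis.sum_repr b6 x
        simp only [hb6] at h0
        exact h0.symm
      rw [hxsum]
      apply Submodule.sum_mem
      intro s _
      have hrs : b6.repr x s = t0 * algebraMap W' K (r s) := by
        calc b6.repr x s = (c ^ m * c ^ (-m)) * b6.repr x s := by rw [honem, one_mul]
          _ = c ^ m * (c ^ (-m) * b6.repr x s) := by ring
          _ = t0 * algebraMap W' K (r s) := by rw [hr s]
      have hsw : (t0 * algebraMap W' K (r s)) • w s = (r s) • (t0 • w s) := by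
        rw [mul_comm, mul_smul, algebraMap_smul]
      rw [hrs, hsw]
      exact Submodule.smul_mem _ _ (Submodule.subset_span ⟨s, rfl⟩)
  -- the dual condition
  set k : ℤ := m + 2 * i with hk_def
  have hck : c ^ m * c ^ (2 * i) = c ^ k := by rw [← zpow_add₀ hc]
  have hBexp : ∀ (v : ⋀[K]^2 N') (s : Fin 6),
      B v (t0 • w s) = algebraMap W' K (epsW (Aux.sigc s)) * algebraMap W' K r0
        * (c ^ k * b6.repr v (Aux.sigc s)) := by
    intro v s
    rw [map_smul, smul_eq_mul, hrepr v s, hq_def, ← hck]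
    ring
  have hdualmem : ∀ v : ⋀[K]^2 N',
      (∀ u ∈ Submodule.span W' (Set.range fun s => t0 • w s),
        B v u ∈ Set.range (algebraMap W' K))
      ↔ ∀ s, ∃ r : W', c ^ k * b6.repr v s = algebraMap W' K r := by
    intro v
    constructor
    · intro hv s
      obtain ⟨r1, hr1⟩ := hv (t0 • w (Aux.sigc s)) (Submodule.subset_span ⟨_, rfl⟩)
      rw [hBexp v (Aux.sigc s), hdec3 s] at hr1
      have h2 : algebraMap W' K (epsW s * epsW s) = 1 := by rw [hepsunit s, map_one]
      have h3 : algebraMap W' K (r0 * s0) = 1 := by rw [hr0s0, map_one]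
      refine ⟨epsW s * s0 * r1, ?_⟩
      calc c ^ k * b6.repr v s = 1 * 1 * (c ^ k * b6.repr v s) := by ring
        _ = algebraMap W' K (epsW s * epsW s) * algebraMap W' K (r0 * s0)
            * (c ^ k * b6.repr v s) := by rw [h2, h3]
        _ = algebraMap W' K (epsW s) * algebraMap W' K s0
            * (algebraMap W' K (epsW s) * algebraMap W' K r0 * (c ^ k * b6.repr v s)) := by
            rw [map_mul, map_mul]; ring
        _ = algebraMap W' K (epsW s) * algebraMap W' K s0 * algebraMap W' K r1 := by rw [← hr1]
        _ = algebraMap W' K (epsW s * s0 * r1) := by rw [map_mul, map_mul]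
    · intro hv u hu
      have hle : Submodule.span W' (Set.range fun s => t0 • w s)
          ≤ Submodule.comap ((B v).restrictScalars W')
              (LinearMap.range (Algebra.linearMap W' K)) := by
        rw [Submodule.span_le]
        rintro x ⟨s, rfl⟩
        obtain ⟨r2, hr2⟩ := hv (Aux.sigc s)
        have : B v (t0 • w s)
            = algebraMap W' K (epsW (Aux.sigc s) * r0 * r2) := by
          rw [hBexp v s, hr2, map_mul, map_mul]
        simp only [Submodule.mem_comap, LinearMap.restrictScalars_apply, LinearMap.mem_range,
          Algebra.linearMap_apply]
        exact ⟨_, this.symm⟩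
      have := hle hu
      simp only [Submodule.mem_comap, LinearMap.restrictScalars_apply, LinearMap.mem_range,
        Algebra.linearMap_apply] at this
      obtain ⟨y, hy⟩ := this
      exact ⟨y, hy⟩
  
  rw [hLm]
  constructor
  · intro hset
    have hd1 : (t0 • w 0) ∈ {v : ⋀[K]^2 N' |
        ∀ u ∈ Submodule.span W' (Set.range fun s => t0 • w s),
          B v u ∈ Set.range (algebraMap W' K)} := by
      rw [hset]
      exact Submodule.subset_span ⟨0, rfl⟩
    obtain ⟨a, ha⟩ := (hdualmem _).mp hd1 0
    rw [hreprscaled, if_pos rfl, mul_one] at ha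
    have ha' : c ^ (k + m) = algebraMap W' K a := by
      rw [zpow_add₀ hc]; exact ha
    have hd2 : ∀ s, ∃ r : W', c ^ k * b6.repr ((c ^ (-k)) • w 0) s = algebraMap W' K r := by
      intro s
      rw [hreprscaled]
      by_cases hs : (0 : Fin 6) = s
      · refine ⟨1, ?_⟩
        rw [if_pos hs, mul_one, ← zpow_add₀ hc, add_neg_cancel, zpow_zero, map_one]
      · exact ⟨0, by rw [if_neg hs, mul_zero, mul_zero, map_zero]⟩
    have hmem2 : ((c ^ (-k)) • w 0) ∈ Submodule.span W' (Set.range fun s => t0 • w s) := by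
      have h1 : ((c ^ (-k)) • w 0) ∈ {v : ⋀[K]^2 N' |
          ∀ u ∈ Submodule.span W' (Set.range fun s => t0 • w s),
            B v u ∈ Set.range (algebraMap W' K)} := (hdualmem _).mpr hd2
      rw [hset] at h1
      exact h1
    obtain ⟨b, hb⟩ := (hmemL _).mp hmem2 0
    rw [hreprscaled, if_pos rfl, mul_one] at hb
    have hb' : c ^ (-(k + m)) = algebraMap W' K b := by
      rw [neg_add, zpow_add₀ hc, mul_comm]; exact hb
    have hab : algebraMap W' K (a * b) = algebraMap W' K 1 := by
      rw [map_mul, ← ha', ← hb', ← zpow_add₀ hc, add_neg_cancel, zpow_zero, map_one]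
    have hab1 : a * b = 1 := hinj hab
    have hpow : ∀ (j : ℤ), 0 < j → ∀ (x : W'), c ^ j = algebraMap W' K x → IsUnit x → False := by
      intro j hj x hx hux
      have hxe : x = π ^ j.toNat := by
        apply hinj
        rw [← hx, map_pow, ← hc_def, ← zpow_natCast, Int.toNat_of_nonneg hj.le]
      rw [hxe] at hux
      have hj' : j.toNat ≠ 0 := by omega
      obtain ⟨n, hn⟩ := Nat.exists_eq_succ_of_ne_zero hj'
      rw [hn, pow_succ] at hux
      exact hπ.not_isUnit (isUnit_of_mul_isUnit_right hux)
    have hkm : k + m = 0 := by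
      by_contra h0
      rcases lt_or_gt_of_ne h0 with hlt | hgt
      · exact hpow (-(k+m)) (by omega) b hb'
          (IsUnit.of_mul_eq_one (a := b) a (by rw [mul_comm]; exact hab1))
      · exact hpow (k+m) hgt a ha' (IsUnit.of_mul_eq_one (a := a) b hab1)
    omega
  · intro hm
    have hkm : k = -m := by omega
    ext v
    simp only [Set.mem_setOf_eq, SetLike.mem_coe]
    constructor
    · intro h
      refine (hmemL v).mpr (fun s => ?_)
      obtain ⟨r, hr⟩ := (hdualmem v).mp h s
      exact ⟨r, by rw [← hkm]; exact hr⟩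
    · intro h
      refine (hdualmem v).mpr (fun s => ?_)
      obtain ⟨r, hr⟩ := (hmemL v).mp h s
      exact ⟨r, by rw [hkm]; exact hr⟩
end
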